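/- arXiv:2510.03268 — 2 statements merged into one kernel-verified Lean document; each statement's English description precedes it below -/
import Mathlib

section
/- For every ν > 0 and all real numbers 0 < a < b, one has log(I_ν(a)/I_ν(b)) > ν·log(a/b) + (a − b). -/
/-- The modified Bessel function of the first kind of order `ν`. -/
noncomputable def besselI (ν m : ℝ) : ℝ :=
  ∑' k : ℕ, (1 / ((Nat.factorial k : ℝ) * Real.Gamma (ν + k + 1))) *
    (m / 2) ^ (2 * (k : ℝ) + ν)

namespace BesselAux

/-- coefficient of the series -/
noncomputable def c (ν : ℝ) (k : ℕ) : ℝ :=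
  1 / ((Nat.factorial k : ℝ) * Real.Gamma (ν + k + 1))

lemma c_pos {ν : ℝ} (hν : 0 < ν) (k : ℕ) : 0 < c ν k := by
  have h1 : (0:ℝ) < (Nat.factorial k : ℝ) := by exact_mod_cast Nat.factorial_pos k
  have h2 : 0 < Real.Gamma (ν + k + 1) := by
    apply Real.Gamma_pos_of_pos; positivity
  unfold c; positivity

lemma c_rec {ν : ℝ} (hν : 0 < ν) (k : ℕ) :
    c ν (k+1) * (((k:ℝ)+1) * (ν + k + 1)) = c ν k := by
  have hne : ν + (k:ℝ) + 1 ≠ 0 := by positivity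
  have hG : Real.Gamma (ν + (k+1:ℕ) + 1) = (ν + k + 1) * Real.Gamma (ν + k + 1) := by
    have : (ν + ((k:ℕ)+1:ℕ) + 1 : ℝ) = (ν + k + 1) + 1 := by push_cast; ring
    rw [this, Real.Gamma_add_one hne]
  have h1 : (0:ℝ) < (Nat.factorial k : ℝ) := by exact_mod_cast Nat.factorial_pos k
  have h2 : 0 < Real.Gamma (ν + k + 1) := by
    apply Real.Gamma_pos_of_pos; positivity
  have hfac : ((Nat.factorial (k+1) : ℕ) : ℝ) = ((k:ℝ)+1) * (Nat.factorial k : ℝ) := by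
    rw [Nat.factorial_succ]; push_cast; ring
  unfold c
  rw [hG, hfac]
  field_simp

lemma Gamma_ge {ν : ℝ} (hν : 0 < ν) (k : ℕ) :
    (Nat.factorial k : ℝ) * Real.Gamma (ν + 1) ≤ Real.Gamma (ν + k + 1) := by
  induction k with
  | zero => simp
  | succ k ih =>
    have hne : ν + (k:ℝ) + 1 ≠ 0 := by positivity
    have hG : Real.Gamma (ν + (k+1:ℕ) + 1) = (ν + k + 1) * Real.Gamma (ν + k + 1) := by
      have : (ν + ((k:ℕ)+1:ℕ) + 1 : ℝ) = (ν + k + 1) + 1 := by push_cast; ring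
      rw [this, Real.Gamma_add_one hne]
    have hfac : ((Nat.factorial (k+1) : ℕ) : ℝ) = ((k:ℝ)+1) * (Nat.factorial k : ℝ) := by
      rw [Nat.factorial_succ]; push_cast; ring
    have hGpos : 0 < Real.Gamma (ν + k + 1) := by
      apply Real.Gamma_pos_of_pos; positivity
    have h1 : (0:ℝ) ≤ (Nat.factorial k : ℝ) * Real.Gamma (ν + 1) := by
      have : 0 < Real.Gamma (ν + 1) := Real.Gamma_pos_of_pos (by positivity)
      have h1' : (0:ℝ) < (Nat.factorial k : ℝ) := by exact_mod_cast Nat.factorial_pos k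
      positivity
    rw [hG, hfac]
    calc ((k:ℝ)+1) * (Nat.factorial k : ℝ) * Real.Gamma (ν + 1)
        ≤ (ν + k + 1) * ((Nat.factorial k : ℝ) * Real.Gamma (ν + 1)) := by
          nlinarith [h1]
      _ ≤ (ν + k + 1) * Real.Gamma (ν + k + 1) := by
          apply mul_le_mul_of_nonneg_left ih (by positivity)

lemma c_le {ν : ℝ} (hν : 0 < ν) (k : ℕ) :
    c ν k ≤ 1 / ((Nat.factorial k : ℝ)^2 * Real.Gamma (ν + 1)) := by
  have h1 : (0:ℝ) < (Nat.factorial k : ℝ) := by exact_mod_cast Nat.factorial_pos k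
  have hG1 : 0 < Real.Gamma (ν + 1) := Real.Gamma_pos_of_pos (by positivity)
  have hGpos : 0 < Real.Gamma (ν + k + 1) := by
    apply Real.Gamma_pos_of_pos; positivity
  unfold c
  apply one_div_le_one_div_of_le (by positivity)
  calc (Nat.factorial k : ℝ)^2 * Real.Gamma (ν + 1)
      = (Nat.factorial k : ℝ) * ((Nat.factorial k : ℝ) * Real.Gamma (ν + 1)) := by ring
    _ ≤ (Nat.factorial k : ℝ) * Real.Gamma (ν + k + 1) :=
        mul_le_mul_of_nonneg_left (Gamma_ge hν k) h1.le

lemma sq_le_four_pow (k : ℕ) : ((k:ℝ)+1)^2 ≤ 4 * 4 ^ k := by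
  induction k with
  | zero => norm_num
  | succ k ih =>
    push_cast
    have : ((k:ℝ)+1+1)^2 ≤ 4 * ((k:ℝ)+1)^2 := by nlinarith [Nat.cast_nonneg (α := ℝ) k]
    calc ((k:ℝ)+1+1)^2 ≤ 4 * ((k:ℝ)+1)^2 := this
      _ ≤ 4 * (4 * 4 ^ k) := by nlinarith
      _ = 4 * 4 ^ (k+1) := by ring

/-- master summability lemma -/
lemma summable_master {ν : ℝ} (hν : 0 < ν) (z : ℝ) (hz : 0 ≤ z) :
    Summable (fun k : ℕ => ((k:ℝ)+1)^2 * c ν k * z ^ k) := by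
  have hG1 : 0 < Real.Gamma (ν + 1) := Real.Gamma_pos_of_pos (by positivity)
  apply Summable.of_nonneg_of_le (f := fun k => (4 / Real.Gamma (ν+1)) * ((4*z) ^ k / (Nat.factorial k : ℝ)))
  · intro k
    have := c_pos hν k
    positivity
  · intro k
    have h1 : (1:ℝ) ≤ (Nat.factorial k : ℝ) := by exact_mod_cast Nat.one_le_iff_ne_zero.mpr (Nat.factorial_pos k).ne'
    have hck := c_le hν k
    have hc0 := (c_pos hν k).le
    have hzk : (0:ℝ) ≤ z ^ k := by positivity
    calc ((k:ℝ)+1)^2 * c ν k * z ^ k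
        ≤ (4 * 4 ^ k) * (1 / ((Nat.factorial k : ℝ)^2 * Real.Gamma (ν + 1))) * z ^ k := by
          apply mul_le_mul_of_nonneg_right _ hzk
          apply mul_le_mul (sq_le_four_pow k) hck hc0 (by positivity)
      _ ≤ (4 * 4 ^ k) * (1 / ((Nat.factorial k : ℝ) * Real.Gamma (ν + 1))) * z ^ k := by
          apply mul_le_mul_of_nonneg_right _ hzk
          apply mul_le_mul_of_nonneg_left _ (by positivity)
          apply one_div_le_one_div_of_le (by positivity)
          apply mul_le_mul_of_nonneg_right _ hG1.le
          nlinarith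
      _ = (4 / Real.Gamma (ν+1)) * ((4*z) ^ k / (Nat.factorial k : ℝ)) := by
          rw [mul_pow]; field_simp
  · exact (Real.summable_pow_div_factorial (4*z)).mul_left _

/-- the "reduced" series -/
noncomputable def S (ν x : ℝ) : ℝ := ∑' k : ℕ, c ν k * (x/2) ^ (2*k)

/-- termwise derivative of `S` -/
noncomputable def D (ν x : ℝ) : ℝ := ∑' k : ℕ, c ν k * k * (x/2) ^ (2*k - 1)

lemma term_le_master {ν : ℝ} (hν : 0 < ν) (y : ℝ) (k : ℕ) :
    c ν k * (y^2) ^ k ≤ ((k:ℝ)+1)^2 * c ν k * (y^2) ^ k := by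
  have := (c_pos hν k).le
  have h : (1:ℝ) ≤ ((k:ℝ)+1)^2 := by nlinarith [Nat.cast_nonneg (α := ℝ) k]
  nlinarith [pow_nonneg (sq_nonneg y) k, mul_nonneg this (pow_nonneg (sq_nonneg y) k)]

lemma summable_S {ν : ℝ} (hν : 0 < ν) (x : ℝ) :
    Summable (fun k : ℕ => c ν k * (x/2) ^ (2*k)) := by
  have h : ∀ k : ℕ, c ν k * (x/2) ^ (2*k) = c ν k * ((x/2)^2) ^ k := by
    intro k; rw [← pow_mul]
  simp_rw [h]
  apply Summable.of_nonneg_of_le _ (term_le_master hν (x/2)) (summable_master hν ((x/2)^2) (sq_nonneg _))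
  intro k
  have := (c_pos hν k).le
  positivity

lemma S_pos {ν : ℝ} (hν : 0 < ν) (x : ℝ) : 0 < S ν x := by
  apply Summable.tsum_pos (summable_S hν x) _ 0
  · simp [c_pos hν 0]
  · intro k
    have := (c_pos hν k).le
    have : (0:ℝ) ≤ (x/2) ^ (2*k) := by
      rw [pow_mul]; positivity
    have := (c_pos hν k).le
    positivity


lemma c_key {ν : ℝ} (hν : 0 < ν) (k : ℕ) :
    ((k:ℝ)+1)^2 * c ν (k+1) ≤ c ν k := by
  have h := c_rec hν k
  have hpos := (c_pos hν (k+1)).le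
  have hk : (0:ℝ) ≤ (k:ℝ) := Nat.cast_nonneg k
  nlinarith [mul_nonneg hpos (mul_nonneg (by linarith : (0:ℝ) ≤ (k:ℝ)+1) hν.le)]

lemma c_succ_lt {ν : ℝ} (hν : 0 < ν) (k : ℕ) : c ν (k+1) < c ν k := by
  have h := c_rec hν k
  have hpos := c_pos hν (k+1)
  have hk : (0:ℝ) ≤ (k:ℝ) := Nat.cast_nonneg k
  nlinarith [mul_pos hpos hν, mul_nonneg (mul_nonneg hpos.le hk) hk,
    mul_nonneg hpos.le hk, mul_nonneg (mul_nonneg hpos.le hk) hν.le]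

lemma summable_D {ν : ℝ} (hν : 0 < ν) (x : ℝ) :
    Summable (fun k : ℕ => c ν k * k * (x/2) ^ (2*k - 1)) := by
  rw [← summable_nat_add_iff 1]
  refine Summable.of_norm (Summable.of_nonneg_of_le (fun k => norm_nonneg _) (fun k => ?_)
    ((summable_master hν ((x/2)^2) (sq_nonneg _)).mul_left |x/2|))
  push_cast
  have h1 : c ν (k+1) * ((k:ℝ)+1) * (x/2) ^ (2*(k+1) - 1)
      = c ν (k+1) * ((k:ℝ)+1) * ((x/2) * ((x/2)^2) ^ k) := by
    have : 2*(k+1) - 1 = 2*k + 1 := by omega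
    rw [this, pow_succ', ← pow_mul]
  rw [Real.norm_eq_abs, h1, abs_mul, abs_mul, abs_mul]
  have hc := (c_pos hν (k+1)).le
  have hc' := (c_pos hν k).le
  have hsq : (0:ℝ) ≤ ((x/2)^2)^k := by positivity
  rw [abs_of_nonneg hc, abs_of_nonneg hsq,
    abs_of_nonneg (by positivity : (0:ℝ) ≤ (k:ℝ)+1)]
  have h2 : c ν (k+1) * ((k:ℝ)+1) ≤ ((k:ℝ)+1)^2 * c ν k := by
    have h3 := (c_succ_lt hν k).le
    have hk : (0:ℝ) ≤ (k:ℝ) := Nat.cast_nonneg k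
    nlinarith [mul_le_mul_of_nonneg_right h3 (by linarith : (0:ℝ) ≤ (k:ℝ)+1),
      mul_nonneg (mul_nonneg hc' hk) (by linarith : (0:ℝ) ≤ (k:ℝ)+1)]
  calc c ν (k+1) * ((k:ℝ)+1) * (|x/2| * ((x/2)^2)^k)
      ≤ ((k:ℝ)+1)^2 * c ν k * (|x/2| * ((x/2)^2)^k) := by
        apply mul_le_mul_of_nonneg_right h2 (by positivity)
    _ = |x/2| * (((k:ℝ)+1)^2 * c ν k * ((x/2)^2) ^ k) := by ring

lemma hasDerivAt_S {ν : ℝ} (hν : 0 < ν) (x : ℝ) : HasDerivAt (S ν) (D ν x) x := by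
  set R := |x| + 1 with hR
  have h0R : (0:ℝ) < R := by positivity
  have hRx : x ∈ Set.Ioo (-R) R :=
    ⟨by linarith [neg_abs_le x], by linarith [le_abs_self x]⟩
  have h0 : (0:ℝ) ∈ Set.Ioo (-R) R := ⟨by linarith, by linarith⟩
  have := hasDerivAt_tsum_of_isPreconnected
    (u := fun k => c ν k * k * (R/2) ^ (2*k - 1))
    (g := fun k z => c ν k * (z/2) ^ (2*k))
    (g' := fun k z => c ν k * k * (z/2) ^ (2*k - 1))
    (summable_D hν R) isOpen_Ioo (convex_Ioo _ _).isPreconnected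
    (fun k y _ => ?_) (fun k y hy => ?_) h0 (summable_S hν 0) hRx
  · exact this
  · have h := (((hasDerivAt_id y).div_const 2).pow (2*k)).const_mul (c ν k)
    refine h.congr_deriv ?_
    simp only [id_eq]
    push_cast; ring
  · have hy' : |y/2| ≤ R/2 := by
      rw [abs_div, abs_two]
      have : |y| ≤ R := abs_le.mpr ⟨by linarith [hy.1], by linarith [hy.2]⟩
      linarith
    have hc := (c_pos hν k).le
    have hk : (0:ℝ) ≤ (k:ℝ) := Nat.cast_nonneg k
    show ‖c ν k * k * (y/2) ^ (2*k - 1)‖ ≤ c ν k * k * (R/2) ^ (2*k - 1)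
    rw [Real.norm_eq_abs, abs_mul, abs_mul, abs_of_nonneg hc, abs_of_nonneg hk, abs_pow]
    apply mul_le_mul_of_nonneg_left (pow_le_pow_left₀ (abs_nonneg _) hy' _) (by positivity)

lemma key {ν : ℝ} (hν : 0 < ν) {y : ℝ} (hy : 0 < y) :
    ∑' k : ℕ, c ν k * k * y ^ (2*k - 1) < ∑' k : ℕ, c ν k * y ^ (2*k) := by
  have hyy : (2*y)/2 = y := by ring
  have hfs : Summable (fun k : ℕ => c ν k * k * y ^ (2*k - 1)) := by
    have := summable_D hν (2*y); rwa [hyy] at this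
  have hSs : Summable (fun k : ℕ => c ν k * y ^ (2*k)) := by
    have := summable_S hν (2*y); rwa [hyy] at this
  -- summability of the comparison pieces
  have hPs : Summable (fun j : ℕ => ((j:ℝ)+1)^2 * c ν (j+1) * y ^ (2*j)) := by
    refine Summable.of_nonneg_of_le (fun j => ?_) (fun j => ?_)
      (summable_master hν (y^2) (sq_nonneg y))
    · have := (c_pos hν (j+1)).le; positivity
    · have h3 := (c_succ_lt hν j).le
      have hpm : y ^ (2*j) = (y^2)^j := by rw [pow_mul]
      rw [hpm]
      have hp : (0:ℝ) ≤ (y^2)^j := by positivity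
      exact mul_le_mul_of_nonneg_right
        (mul_le_mul_of_nonneg_left h3 (by positivity)) hp
  have hQs : Summable (fun j : ℕ => c ν (j+1) * y ^ (2*j+2)) := by
    refine ((summable_nat_add_iff 1).2 hSs).congr fun j => ?_
    have : 2*(j+1) = 2*j+2 := by omega
    rw [this]
  have hfs' : Summable (fun j : ℕ => c ν (j+1) * ((j:ℝ)+1) * y ^ (2*j+1)) := by
    refine ((summable_nat_add_iff 1).2 hfs).congr fun j => ?_
    have h : 2*(j+1) - 1 = 2*j+1 := by omega
    rw [h]; push_cast; ring
  -- rewrite LHS as the shifted sum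
  have hD : ∑' k : ℕ, c ν k * k * y ^ (2*k - 1)
      = ∑' j : ℕ, c ν (j+1) * ((j:ℝ)+1) * y ^ (2*j+1) := by
    rw [Summable.tsum_eq_zero_add hfs]
    simp only [Nat.cast_zero, mul_zero, zero_mul, zero_add]
    exact tsum_congr fun j => by
      have h : 2*(j+1) - 1 = 2*j+1 := by omega
      rw [h]; push_cast; ring
  -- termwise AM-GM bound
  have hterm : ∀ j : ℕ, c ν (j+1) * ((j:ℝ)+1) * y ^ (2*j+1)
      ≤ (((j:ℝ)+1)^2 * c ν (j+1) * y ^ (2*j) + c ν (j+1) * y ^ (2*j+2))/2 := by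
    intro j
    have hc := (c_pos hν (j+1)).le
    have h1 : y ^ (2*j) = (y^j)^2 := by rw [← pow_mul, mul_comm]
    have h2 : y ^ (2*j+1) = (y^j)^2 * y := by rw [pow_succ, h1]
    have h3 : y ^ (2*j+2) = (y^j)^2 * y^2 := by rw [pow_add, h1]
    rw [h1, h2, h3]
    nlinarith [mul_nonneg hc (sq_nonneg (((j:ℝ)+1) * y^j - y^j * y))]
  have hPQs : Summable (fun j : ℕ =>
      (((j:ℝ)+1)^2 * c ν (j+1) * y ^ (2*j) + c ν (j+1) * y ^ (2*j+2))/2) :=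
    (hPs.add hQs).div_const 2
  have step1 : ∑' j : ℕ, c ν (j+1) * ((j:ℝ)+1) * y ^ (2*j+1)
      ≤ (∑' j : ℕ, ((j:ℝ)+1)^2 * c ν (j+1) * y ^ (2*j)
        + ∑' j : ℕ, c ν (j+1) * y ^ (2*j+2))/2 := by
    calc ∑' j : ℕ, c ν (j+1) * ((j:ℝ)+1) * y ^ (2*j+1)
        ≤ ∑' j : ℕ, (((j:ℝ)+1)^2 * c ν (j+1) * y ^ (2*j) + c ν (j+1) * y ^ (2*j+2))/2 :=
          Summable.tsum_le_tsum hterm hfs' hPQs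
      _ = _ := by rw [tsum_div_const, Summable.tsum_add hPs hQs]
  -- P sum strictly below S sum
  have step2 : ∑' j : ℕ, ((j:ℝ)+1)^2 * c ν (j+1) * y ^ (2*j)
      < ∑' k : ℕ, c ν k * y ^ (2*k) := by
    refine Summable.tsum_lt_tsum (f := fun j : ℕ => ((j:ℝ)+1)^2 * c ν (j+1) * y ^ (2*j))
      (i := 0) (fun j => ?_) ?_ hPs hSs
    · exact mul_le_mul_of_nonneg_right (c_key hν j) (by positivity)
    · simp only [Nat.cast_zero, zero_add, one_pow, mul_zero, pow_zero, mul_one, one_mul]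
      exact c_succ_lt hν 0
  -- Q sum equals S sum minus first term
  have step3 : ∑' j : ℕ, c ν (j+1) * y ^ (2*j+2)
      = (∑' k : ℕ, c ν k * y ^ (2*k)) - c ν 0 := by
    have h := Summable.tsum_eq_zero_add hSs
    have h2 : ∑' j : ℕ, c ν (j+1) * y ^ (2*(j+1)) = ∑' j : ℕ, c ν (j+1) * y ^ (2*j+2) :=
      tsum_congr fun j => by rw [show 2*(j+1) = 2*j+2 by omega]
    rw [h2] at h
    simp only [mul_zero, pow_zero, mul_one] at h
    linarith
  have hc0 := c_pos hν 0
  rw [hD]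
  calc ∑' j : ℕ, c ν (j+1) * ((j:ℝ)+1) * y ^ (2*j+1)
      ≤ (∑' j : ℕ, ((j:ℝ)+1)^2 * c ν (j+1) * y ^ (2*j)
        + ∑' j : ℕ, c ν (j+1) * y ^ (2*j+2))/2 := step1
    _ < ∑' k : ℕ, c ν k * y ^ (2*k) := by rw [step3]; linarith

lemma D_lt_S {ν : ℝ} (hν : 0 < ν) {x : ℝ} (hx : 0 < x) : D ν x < S ν x :=
  key hν (by positivity : (0:ℝ) < x/2)

end BesselAux


theorem besselI_log_ratio_gt (ν a b : ℝ) (hν : 0 < ν) (ha : 0 < a) (hab : a < b) :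
    Real.log (besselI ν a / besselI ν b) > ν * Real.log (a / b) + (a - b) := by
  have hb : 0 < b := lt_trans ha hab
  have hbessel : ∀ x : ℝ, 0 < x → besselI ν x = (x/2) ^ ν * BesselAux.S ν x := by
    intro x hx
    have hx2 : (0:ℝ) < x/2 := by positivity
    unfold besselI BesselAux.S
    rw [← tsum_mul_left]
    refine tsum_congr fun k => ?_
    rw [Real.rpow_add hx2, show (2*(k:ℝ)) = ((2*k : ℕ):ℝ) by push_cast; ring,
      Real.rpow_natCast]
    unfold BesselAux.c
    ring
  have hG : ∀ t : ℝ, HasDerivAt (fun z => Real.exp (-z) * BesselAux.S ν z)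
      (Real.exp (-t) * (BesselAux.D ν t - BesselAux.S ν t)) t := by
    intro t
    have h1 : HasDerivAt (fun z : ℝ => -z) (-1) t := (hasDerivAt_id t).neg
    have h3 := h1.exp.mul (BesselAux.hasDerivAt_S hν t)
    refine h3.congr_deriv ?_
    ring
  have anti : StrictAntiOn (fun z => Real.exp (-z) * BesselAux.S ν z) (Set.Ici 0) := by
    apply strictAntiOn_of_deriv_neg (convex_Ici 0)
    · exact fun t _ => (hG t).continuousAt.continuousWithinAt
    · intro t ht
      rw [interior_Ici] at ht
      rw [(hG t).deriv]
      have h1 := BesselAux.D_lt_S hν (Set.mem_Ioi.mp ht)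
      exact mul_neg_of_pos_of_neg (Real.exp_pos _) (by linarith)
  have hSa := BesselAux.S_pos hν a
  have hSb := BesselAux.S_pos hν b
  have hlt : Real.exp (-b) * BesselAux.S ν b < Real.exp (-a) * BesselAux.S ν a :=
    anti (Set.mem_Ici.mpr ha.le) (Set.mem_Ici.mpr hb.le) hab
  have hlog : Real.log (BesselAux.S ν a) - Real.log (BesselAux.S ν b) > a - b := by
    have h1 := Real.log_lt_log (by positivity) hlt
    rw [Real.log_mul (Real.exp_ne_zero _) hSb.ne', Real.log_mul (Real.exp_ne_zero _) hSa.ne',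
      Real.log_exp, Real.log_exp] at h1
    linarith
  have ha2 : (0:ℝ) < a/2 := by positivity
  have hb2 : (0:ℝ) < b/2 := by positivity
  have hBa : (0:ℝ) < besselI ν a := by rw [hbessel a ha]; positivity
  have hBb : (0:ℝ) < besselI ν b := by rw [hbessel b hb]; positivity
  rw [Real.log_div hBa.ne' hBb.ne', hbessel a ha, hbessel b hb,
    Real.log_mul (by positivity) hSa.ne', Real.log_mul (by positivity) hSb.ne',
    Real.log_rpow ha2, Real.log_rpow hb2, Real.log_div ha.ne' hb.ne']
  have e1 : Real.log (a/2) = Real.log a - Real.log 2 := Real.log_div ha.ne' two_ne_zero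
  have e2 : Real.log (b/2) = Real.log b - Real.log 2 := Real.log_div hb.ne' two_ne_zero
  have e3 : ν * Real.log (a/2) - ν * Real.log (b/2) = ν * (Real.log a - Real.log b) := by
    rw [e1, e2]; ring
  have e4 : ν * (Real.log a - Real.log b) = ν * Real.log a - ν * Real.log b := by ring
  linarith [hlog]
end

section
/- Let κ, ν, τ > 0. Define, for w ∈ [0, 1], M(w) = κ + w/τ and Ĵ(w) = −w/τ + log(I_ν(M(w))/M(w)^ν) − log(I_ν(κ)/κ^ν). Then Ĵ is strictly decreasing on [0, 1]. -/
open Real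

/-- `Ĵ(w) = −w/τ + log(I_ν(κ + w/τ)/(κ + w/τ)^ν) − log(I_ν(κ)/κ^ν)`. -/
noncomputable def JhatW (κ ν τ w : ℝ) : ℝ :=
  -w / τ + Real.log (besselI ν (κ + w / τ) / (κ + w / τ) ^ ν) -
    Real.log (besselI ν κ / κ ^ ν)

namespace BesselAux

/-- series coefficient -/
noncomputable def bb (ν : ℝ) (k : ℕ) : ℝ :=
  1 / ((Nat.factorial k : ℝ) * Real.Gamma (ν + k + 1))

/-- `g(m) = ∑ b_k (m/2)^{2k}`, so that `besselI ν m = (m/2)^ν g(m)`. -/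
noncomputable def gg (ν m : ℝ) : ℝ := ∑' k : ℕ, bb ν k * (m / 2) ^ (2 * k)

/-- the term-by-term derivative of `gg` -/
noncomputable def gg' (ν m : ℝ) : ℝ := ∑' k : ℕ, (k : ℝ) * bb ν k * (m / 2) ^ (2 * k - 1)

variable {ν : ℝ}

lemma bb_pos (hν : 0 < ν) (k : ℕ) : 0 < bb ν k := by
  have hk : (0:ℝ) ≤ (k:ℝ) := Nat.cast_nonneg k
  have h1 : (0:ℝ) < ν + k + 1 := by linarith
  have h2 := Real.Gamma_pos_of_pos h1
  have h3 : (0:ℝ) < (Nat.factorial k : ℝ) := by positivity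
  unfold bb
  positivity

lemma bb_succ (hν : 0 < ν) (k : ℕ) : bb ν (k + 1) = bb ν k / ((k + 1) * (ν + k + 1)) := by
  have hk : (0:ℝ) ≤ (k:ℝ) := Nat.cast_nonneg k
  have h1 : (0:ℝ) < ν + k + 1 := by linarith
  have hg : Real.Gamma (ν + (k+1 : ℕ) + 1) = (ν + k + 1) * Real.Gamma (ν + k + 1) := by
    have h : (ν + (k+1 : ℕ) + 1 : ℝ) = (ν + k + 1) + 1 := by push_cast; ring
    rw [h, Real.Gamma_add_one h1.ne']
  have hΓ := (Real.Gamma_pos_of_pos h1).ne'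
  have hfac : (0:ℝ) < (Nat.factorial k : ℝ) := by positivity
  unfold bb
  rw [hg, Nat.factorial_succ]
  push_cast
  field_simp

lemma bb_le (hν : 0 < ν) (k : ℕ) : bb ν k ≤ bb ν 0 / (Nat.factorial k : ℝ) := by
  induction k with
  | zero => simp
  | succ n ih =>
    rw [bb_succ hν]
    have hk : (0:ℝ) ≤ (n:ℝ) := Nat.cast_nonneg n
    have h1 : (1:ℝ) ≤ ν + n + 1 := by linarith
    have hb := bb_pos hν n
    have hfac : (0:ℝ) < (Nat.factorial n : ℝ) := by positivity
    have ih' : bb ν n * (Nat.factorial n : ℝ) ≤ bb ν 0 := by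
      rw [← le_div_iff₀ hfac]; exact ih
    have step : bb ν n / ((n + 1) * (ν + n + 1)) ≤ bb ν n / (n + 1) := by
      apply div_le_div_of_nonneg_left hb.le (by positivity)
      nlinarith
    refine step.trans ?_
    rw [Nat.factorial_succ]
    push_cast
    rw [div_le_div_iff₀ (by positivity) (by positivity)]
    nlinarith

lemma summable_gg (hν : 0 < ν) (m : ℝ) :
    Summable fun k : ℕ => bb ν k * (m / 2) ^ (2 * k) := by
  apply Summable.of_nonneg_of_le (fun k => ?_) (fun k => ?_)
    (((Real.summable_pow_div_factorial ((m/2)^2)).mul_left (bb ν 0)))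
  · have h : (m/2) ^ (2*k) = ((m/2)^2)^k := by rw [pow_mul]
    rw [h]
    have := bb_pos hν k
    positivity
  · have h1 : (m/2) ^ (2*k) = ((m/2)^2)^k := by rw [pow_mul]
    rw [h1]
    have h2 := bb_le hν k
    have h3 : (0:ℝ) ≤ ((m/2)^2)^k := by positivity
    calc bb ν k * ((m/2)^2)^k ≤ (bb ν 0 / (Nat.factorial k : ℝ)) * ((m/2)^2)^k :=
          mul_le_mul_of_nonneg_right h2 h3
    _ = bb ν 0 * (((m/2)^2)^k / (Nat.factorial k : ℝ)) := by ring

lemma gg'_term_bound (hν : 0 < ν) {R y : ℝ} (hR1 : 1 ≤ R) (hy : |y| ≤ R) (k : ℕ) :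
    ‖(k : ℝ) * bb ν k * (y / 2) ^ (2 * k - 1)‖ ≤
      bb ν 0 * ((2 * R^2)^k / (Nat.factorial k : ℝ)) := by
  have hb := bb_pos hν k
  have hkc : (0:ℝ) ≤ (k:ℝ) := Nat.cast_nonneg k
  have h2 : ‖(y/2) ^ (2*k-1)‖ ≤ R ^ (2*k) := by
    rw [norm_pow, Real.norm_eq_abs]
    have hyR : |y / 2| ≤ R := by
      rw [abs_div, abs_two]
      linarith
    calc |y/2| ^ (2*k-1) ≤ R ^ (2*k-1) := pow_le_pow_left₀ (abs_nonneg _) hyR _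
    _ ≤ R ^ (2*k) := pow_le_pow_right₀ hR1 (Nat.sub_le _ _)
  have h3 : (k:ℝ) * bb ν k ≤ bb ν 0 * 2^k / (Nat.factorial k : ℝ) := by
    have hk2 : (k:ℝ) ≤ 2^k := by exact_mod_cast (Nat.lt_two_pow_self (n := k)).le
    have h4 := bb_le hν k
    have hfac : (0:ℝ) < (Nat.factorial k : ℝ) := by positivity
    calc (k:ℝ) * bb ν k ≤ 2^k * (bb ν 0 / (Nat.factorial k : ℝ)) := by
          apply mul_le_mul hk2 h4 hb.le (by positivity)
    _ = bb ν 0 * 2^k / (Nat.factorial k : ℝ) := by ring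
  have hfac : (0:ℝ) < (Nat.factorial k : ℝ) := by positivity
  calc ‖(k : ℝ) * bb ν k * (y / 2) ^ (2 * k - 1)‖
      = ((k:ℝ) * bb ν k) * ‖(y/2) ^ (2*k-1)‖ := by
        rw [norm_mul, Real.norm_eq_abs ((k:ℝ) * bb ν k),
          abs_of_nonneg (mul_nonneg hkc hb.le)]
  _ ≤ (bb ν 0 * 2^k / (Nat.factorial k : ℝ)) * R ^ (2*k) := by
        apply mul_le_mul h3 h2 (norm_nonneg _) (div_nonneg (mul_nonneg (bb_pos hν 0).le (by positivity)) hfac.le)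
  _ = bb ν 0 * ((2 * R^2)^k / (Nat.factorial k : ℝ)) := by
        rw [mul_pow, pow_mul]; ring

lemma summable_gg' (hν : 0 < ν) (m : ℝ) :
    Summable fun k : ℕ => (k : ℝ) * bb ν k * (m / 2) ^ (2 * k - 1) := by
  have hR1 : (1:ℝ) ≤ |m| + 1 := by have := abs_nonneg m; linarith
  apply Summable.of_norm
  apply Summable.of_nonneg_of_le (fun k => norm_nonneg _)
    (fun k => gg'_term_bound hν hR1 (by linarith [abs_nonneg m]) k)
    ((Real.summable_pow_div_factorial (2 * (|m|+1)^2)).mul_left (bb ν 0))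

lemma hasDerivAt_gg (hν : 0 < ν) (m : ℝ) : HasDerivAt (gg ν) (gg' ν m) m := by
  have hR1 : (1:ℝ) ≤ |m| + 1 := by have := abs_nonneg m; linarith
  have hmem : m ∈ Set.Ioo (-(|m|+1)) (|m|+1) := by
    constructor
    · linarith [neg_abs_le m]
    · linarith [le_abs_self m]
  have hderiv : ∀ k : ℕ, ∀ y : ℝ, y ∈ Set.Ioo (-(|m|+1)) (|m|+1) →
      HasDerivAt (fun z => bb ν k * (z / 2) ^ (2 * k))
        ((k : ℝ) * bb ν k * (y / 2) ^ (2 * k - 1)) y := by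
    intro k y _
    have h1 : HasDerivAt (fun z : ℝ => z / 2) (1/2) y := (hasDerivAt_id y).div_const 2
    have h2 : HasDerivAt (fun z => bb ν k * (z / 2) ^ (2 * k)) _ y := (h1.pow (2*k)).const_mul (bb ν k)
    convert h2 using 1
    push_cast
    ring
  have hbound : ∀ k : ℕ, ∀ y : ℝ, y ∈ Set.Ioo (-(|m|+1)) (|m|+1) →
      ‖(k : ℝ) * bb ν k * (y / 2) ^ (2 * k - 1)‖ ≤
        bb ν 0 * ((2 * (|m|+1)^2)^k / (Nat.factorial k : ℝ)) := by
    intro k y hy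
    rw [Set.mem_Ioo] at hy
    exact gg'_term_bound hν hR1 (abs_le.2 ⟨hy.1.le, hy.2.le⟩) k
  exact hasDerivAt_tsum_of_isPreconnected
    ((Real.summable_pow_div_factorial (2 * (|m|+1)^2)).mul_left (bb ν 0))
    isOpen_Ioo (convex_Ioo _ _).isPreconnected hderiv hbound hmem
    (summable_gg hν m) hmem

lemma gg_pos (hν : 0 < ν) (m : ℝ) : 0 < gg ν m := by
  have h0 : bb ν 0 * (m/2)^(2*0) ≤ gg ν m := by
    apply Summable.le_tsum (summable_gg hν m) 0
    intro j _
    have := bb_pos hν j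
    have h : (m/2) ^ (2*j) = ((m/2)^2)^j := by rw [pow_mul]
    rw [h]; positivity
  have := bb_pos hν 0
  simp only [Nat.mul_zero, pow_zero, mul_one] at h0
  linarith

set_option maxHeartbeats 1000000 in
lemma gg'_lt_gg (hν : 0 < ν) {m : ℝ} (hm : 0 < m) : gg' ν m < gg ν m := by
  have hS' := summable_gg' hν m
  have hS := summable_gg hν m
  have hSsucc : Summable fun j : ℕ => bb ν (j+1) * (m / 2) ^ (2 * (j+1)) :=
    (summable_nat_add_iff 1).2 hS
  have hSsucc' : Summable fun j : ℕ => ((j+1 : ℕ) : ℝ) * bb ν (j+1) * (m / 2) ^ (2 * (j+1) - 1) :=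
    (summable_nat_add_iff 1).2 hS'
  have hx : (0:ℝ) < m / 2 := by linarith
  -- termwise bound
  have key : ∀ j : ℕ, ((j+1 : ℕ) : ℝ) * bb ν (j+1) * (m / 2) ^ (2 * (j+1) - 1) ≤
      (bb ν j * (m/2)^(2*j) + bb ν (j+1) * (m/2)^(2*(j+1))) / 2 := by
    intro j
    have hb := bb_pos hν j
    have hb1 := bb_pos hν (j+1)
    have hk : (0:ℝ) ≤ (j:ℝ) := Nat.cast_nonneg j
    have hbs : bb ν j = bb ν (j+1) * (((j:ℝ) + 1) * (ν + j + 1)) := by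
      rw [bb_succ hν j]
      field_simp
    have e1 : (m/2) ^ (2*(j+1)-1) = (m/2)^(2*j) * (m/2) := by
      rw [show 2*(j+1)-1 = 2*j+1 by omega, pow_succ]
    have e3 : (m/2) ^ (2*(j+1)) = (m/2)^(2*j) * (m/2)^2 := by
      rw [show 2*(j+1) = 2*j+2 by omega, pow_add]
    rw [e1, e3, hbs]
    have hX : (0:ℝ) ≤ (m/2)^(2*j) := by positivity
    have hq : 2 * ((j:ℝ)+1) * (m/2) ≤ ((j:ℝ)+1) * (ν + j + 1) + (m/2)^2 := by
      nlinarith [sq_nonneg (((j:ℝ)+1) - m/2)]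
    have h5 := mul_le_mul_of_nonneg_left hq (mul_nonneg hb1.le hX)
    push_cast
    nlinarith [h5]
  have hzero : gg' ν m = ∑' j : ℕ, ((j+1 : ℕ) : ℝ) * bb ν (j+1) * (m / 2) ^ (2 * (j+1) - 1) := by
    rw [gg', Summable.tsum_eq_zero_add hS']
    simp
  have hRHSsum : Summable fun j : ℕ =>
      (bb ν j * (m/2)^(2*j) + bb ν (j+1) * (m/2)^(2*(j+1))) / 2 :=
    (hS.add hSsucc).div_const 2
  have hle : gg' ν m ≤ ∑' j : ℕ,
      (bb ν j * (m/2)^(2*j) + bb ν (j+1) * (m/2)^(2*(j+1))) / 2 := by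
    rw [hzero]
    exact Summable.tsum_le_tsum key hSsucc' hRHSsum
  have hsumval : ∑' j : ℕ, (bb ν j * (m/2)^(2*j) + bb ν (j+1) * (m/2)^(2*(j+1))) / 2
      = (gg ν m + (gg ν m - bb ν 0)) / 2 := by
    rw [tsum_div_const, Summable.tsum_add hS hSsucc]
    congr 2
    have h := Summable.tsum_eq_zero_add hS
    rw [gg]
    simp only [Nat.mul_zero, pow_zero, mul_one] at h
    rw [h]
    ring
  have hb0 := bb_pos hν 0
  rw [hsumval] at hle
  linarith

lemma expgg_strictAnti (hν : 0 < ν) :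
    StrictAntiOn (fun m => Real.exp (-m) * gg ν m) (Set.Ici (0:ℝ)) := by
  have hd : ∀ x : ℝ, HasDerivAt (fun m => Real.exp (-m) * gg ν m)
      (Real.exp (-x) * (-1) * gg ν x + Real.exp (-x) * gg' ν x) x := by
    intro x
    have hexp : HasDerivAt (fun m : ℝ => Real.exp (-m)) (Real.exp (-x) * (-1)) x :=
      (Real.hasDerivAt_exp (-x)).comp x (hasDerivAt_neg x)
    exact hexp.mul (hasDerivAt_gg hν x)
  apply strictAntiOn_of_deriv_neg (convex_Ici 0)
  · exact fun x _ => ((hd x).continuousAt).continuousWithinAt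
  · intro x hx
    rw [interior_Ici] at hx
    rw [(hd x).deriv]
    have h1 := Real.exp_pos (-x)
    have h2 := gg'_lt_gg hν (Set.mem_Ioi.1 hx)
    nlinarith [mul_lt_mul_of_pos_left h2 h1]

lemma besselI_eq (hν : 0 < ν) {m : ℝ} (hm : 0 < m) :
    besselI ν m = (m/2) ^ ν * gg ν m := by
  have hpos : (0:ℝ) < m / 2 := by linarith
  rw [besselI, gg, ← tsum_mul_left]
  apply tsum_congr
  intro k
  rw [show (2 * (k:ℝ) + ν) = ν + ((2*k : ℕ) : ℝ) by push_cast; ring,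
    Real.rpow_add hpos, Real.rpow_natCast, bb]
  ring

lemma log_besselI (hν : 0 < ν) {m : ℝ} (hm : 0 < m) :
    Real.log (besselI ν m / m ^ ν) = Real.log (gg ν m) - Real.log ((2:ℝ) ^ ν) := by
  have hpos : (0:ℝ) < m / 2 := by linarith
  have hgg := gg_pos hν m
  have h2ν : (0:ℝ) < (2:ℝ) ^ ν := Real.rpow_pos_of_pos (by norm_num) ν
  have hmν : (0:ℝ) < m ^ ν := Real.rpow_pos_of_pos hm ν
  have hdiv : besselI ν m / m ^ ν = gg ν m / (2:ℝ) ^ ν := by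
    rw [besselI_eq hν hm]
    rw [div_rpow hm.le (by norm_num : (0:ℝ) ≤ 2)]
    field_simp
  rw [hdiv, Real.log_div hgg.ne' h2ν.ne']

end BesselAux

theorem JhatW_strictAnti (κ ν τ : ℝ) (hκ : 0 < κ) (hν : 0 < ν) (hτ : 0 < τ) :
    StrictAntiOn (JhatW κ ν τ) (Set.Icc (0:ℝ) 1) := by
  intro w₁ hw₁ w₂ hw₂ hlt
  have hM1 : 0 < κ + w₁ / τ := by
    have : 0 ≤ w₁ / τ := div_nonneg hw₁.1 hτ.le
    linarith
  have hM2 : 0 < κ + w₂ / τ := by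
    have : 0 ≤ w₂ / τ := div_nonneg (hw₂.1) hτ.le
    linarith
  have hMlt : κ + w₁ / τ < κ + w₂ / τ := by
    have : w₁ / τ < w₂ / τ := div_lt_div_of_pos_right hlt hτ  -- name check
    linarith
  have hanti := BesselAux.expgg_strictAnti (ν := ν) hν
    (Set.mem_Ici.2 hM1.le) (Set.mem_Ici.2 hM2.le) hMlt
  -- take logs
  have hgg1 := BesselAux.gg_pos (ν := ν) hν (κ + w₁ / τ)
  have hgg2 := BesselAux.gg_pos (ν := ν) hν (κ + w₂ / τ)
  have hlog : -(κ + w₂ / τ) + Real.log (BesselAux.gg ν (κ + w₂ / τ)) <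
      -(κ + w₁ / τ) + Real.log (BesselAux.gg ν (κ + w₁ / τ)) := by
    have h1 := Real.log_lt_log (by positivity) hanti
    rwa [Real.log_mul (Real.exp_ne_zero _) hgg2.ne', Real.log_mul (Real.exp_ne_zero _) hgg1.ne',
      Real.log_exp, Real.log_exp] at h1
  rw [JhatW, JhatW, BesselAux.log_besselI hν hM1, BesselAux.log_besselI hν hM2]
  have : -w₂ / τ + Real.log (BesselAux.gg ν (κ + w₂ / τ)) <
      -w₁ / τ + Real.log (BesselAux.gg ν (κ + w₁ / τ)) := by
    have e1 : -w₁ / τ = -(κ + w₁/τ) + κ := by ring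
    have e2 : -w₂ / τ = -(κ + w₂/τ) + κ := by ring
    rw [e1, e2]
    linarith
  linarith
end
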